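/- Let G and H be finite connected nontrivial simple graphs of order n₁ and n₂ respectively, and suppose the strong resolving graph G_SR is a C-graph (its vertex set can be partitioned into β(G_SR) cliques). Then dim_s(G ⊠ H) = n₂ · dim_s(G) + n₁ · dim_s(H) − dim_s(G) · dim_s(H). -/

import Mathlib

open SimpleGraph Finset

variable {α β : Type*}

/-- The strong product of two simple graphs: distinct vertices `(a,b)` and `(c,d)` are adjacent
iff (`a = c` or `a ~ c`) and (`b = d` or `b ~ d`). -/
def strongProd (G : SimpleGraph α) (H : SimpleGraph β) : SimpleGraph (α × β) where
  Adj x y := x ≠ y ∧ (x.1 = y.1 ∨ G.Adj x.1 y.1) ∧ (x.2 = y.2 ∨ H.Adj x.2 y.2)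
  symm := ⟨by
    rintro x y ⟨h1, h2, h3⟩
    exact ⟨h1.symm, h2.imp Eq.symm (fun a => a.symm), h3.imp Eq.symm (fun a => a.symm)⟩⟩
  loopless := ⟨fun x h => h.1 rfl⟩

/-- The Cartesian sum (disjunctive product) of two simple graphs. -/
def cartSum (G : SimpleGraph α) (H : SimpleGraph β) : SimpleGraph (α × β) where
  Adj x y := x ≠ y ∧ (G.Adj x.1 y.1 ∨ H.Adj x.2 y.2)
  symm := ⟨by
    rintro x y ⟨h1, h2⟩
    exact ⟨h1.symm, h2.imp (fun a => a.symm) (fun a => a.symm)⟩⟩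
  loopless := ⟨fun x h => h.1 rfl⟩

/-- `u` is maximally distant from `v` in `G`. -/
def MaximallyDistantFrom (G : SimpleGraph α) (u v : α) : Prop :=
  ∀ w, G.Adj u w → G.dist v w ≤ G.dist u v

/-- `u` and `v` are mutually maximally distant in `G`. -/
def MutuallyMaximallyDistant (G : SimpleGraph α) (u v : α) : Prop :=
  MaximallyDistantFrom G u v ∧ MaximallyDistantFrom G v u

/-- The strong resolving graph of `G`. -/
def strongResolvingGraph (G : SimpleGraph α) : SimpleGraph α where
  Adj u v := u ≠ v ∧ MutuallyMaximallyDistant G u v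
  symm := ⟨by rintro u v ⟨h1, h2, h3⟩; exact ⟨h1.symm, h3, h2⟩⟩
  loopless := ⟨fun x h => h.1 rfl⟩

/-- A finset of vertices is independent if no two of its (distinct) members are adjacent. -/
def IsIndepFinset (G : SimpleGraph α) (s : Finset α) : Prop :=
  ∀ u ∈ s, ∀ v ∈ s, u ≠ v → ¬ G.Adj u v

/-- The independence number `β(G)`. -/
noncomputable def indepNum (G : SimpleGraph α) [Fintype α] : ℕ :=
  sSup {n | ∃ s : Finset α, IsIndepFinset G s ∧ s.card = n}

/-- `w` strongly resolves `u` and `v` in `G`. -/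
def StronglyResolves (G : SimpleGraph α) (w u v : α) : Prop :=
  G.dist w u = G.dist w v + G.dist v u ∨ G.dist w v = G.dist w u + G.dist u v

/-- A strong metric generator for `G`. -/
def IsStrongMetricGenerator (G : SimpleGraph α) (s : Finset α) : Prop :=
  ∀ u v : α, u ≠ v → ∃ w ∈ s, StronglyResolves G w u v

/-- The strong metric dimension of `G`. -/
noncomputable def sdim (G : SimpleGraph α) [Fintype α] : ℕ :=
  sInf {n | ∃ s : Finset α, IsStrongMetricGenerator G s ∧ s.card = n}

/-- A `C`-graph: the vertex set can be partitioned into `β(G)` cliques. -/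
def IsCGraph (G : SimpleGraph α) [Fintype α] [DecidableEq α] : Prop :=
  ∃ P : Finpartition (Finset.univ : Finset α),
    P.parts.card = _root_.indepNum G ∧ ∀ p ∈ P.parts, G.IsClique (p : Set α)

/-- A `C₁`-graph: the vertex set can be partitioned into `β(G)` cliques together with one
singleton `{b}`, where `b` is an isolated vertex. -/
def IsC1Graph (G : SimpleGraph α) [Fintype α] [DecidableEq α] : Prop :=
  ∃ (P : Finpartition (Finset.univ : Finset α)) (b : α),
    {b} ∈ P.parts ∧ (∀ w, ¬ G.Adj b w) ∧
    P.parts.card = _root_.indepNum G + 1 ∧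
    ∀ p ∈ P.parts, p ≠ {b} → G.IsClique (p : Set α)

/-- The diameter of a graph: the largest distance between two vertices. -/
noncomputable def gDiam (G : SimpleGraph α) : ℕ := sSup {d | ∃ u v : α, G.dist u v = d}

section ProdWalk

variable {G : SimpleGraph α} {H : SimpleGraph β}

def fstHom (G : SimpleGraph α) (H : SimpleGraph β) (b : β) : G →g strongProd G H where
  toFun a := (a, b)
  map_rel' := fun h => ⟨fun he => h.ne (congrArg Prod.fst he), Or.inr h, Or.inl rfl⟩

def sndHom (G : SimpleGraph α) (H : SimpleGraph β) (a : α) : H →g strongProd G H where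
  toFun b := (a, b)
  map_rel' := fun h => ⟨fun he => h.ne (congrArg Prod.snd he), Or.inl rfl, Or.inr h⟩

def prodWalk : ∀ {a c : α} {b d : β}, G.Walk a c → H.Walk b d → (strongProd G H).Walk (a, b) (c, d)
  | _, _, _, _, Walk.nil, q => q.map (sndHom G H _)
  | _, _, _, _, Walk.cons h p', Walk.nil => (Walk.cons h p').map (fstHom G H _)
  | _, _, _, _, Walk.cons h p', Walk.cons h' q' =>
      Walk.cons ⟨fun he => h.ne (congrArg Prod.fst he), Or.inr h, Or.inr h'⟩ (prodWalk p' q')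

lemma prodWalk_length : ∀ {a c : α} {b d : β} (p : G.Walk a c) (q : H.Walk b d),
    (prodWalk p q).length = max p.length q.length
  | _, _, _, _, Walk.nil, q => by simp [prodWalk]; exact Walk.length_map _ _
  | _, _, _, _, Walk.cons h p', Walk.nil => by
      simp [prodWalk]; exact congrArg (· + 1) (Walk.length_map _ _)
  | _, _, _, _, Walk.cons h p', Walk.cons h' q' => by
      simp only [prodWalk, Walk.length_cons, prodWalk_length p' q']
      change (prodWalk p' q').length + 1 = _
      rw [prodWalk_length p' q']
      omega

lemma strongProd_connected (hG : G.Connected) (hH : H.Connected) : (strongProd G H).Connected := by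
  have : Nonempty (α × β) := ⟨⟨hG.nonempty.some, hH.nonempty.some⟩⟩
  refine ⟨fun x y => ?_⟩
  obtain ⟨p⟩ := hG x.1 y.1
  obtain ⟨q⟩ := hH x.2 y.2
  exact ⟨(prodWalk p q).copy (by simp) (by simp)⟩

lemma dist_fst_le (hG : G.Connected) {x y : α × β} (W : (strongProd G H).Walk x y) :
    G.dist x.1 y.1 ≤ W.length := by
  induction W with
  | nil => simp
  | cons h W ih =>
    rename_i u v w
    calc G.dist u.1 w.1 ≤ G.dist u.1 v.1 + G.dist v.1 w.1 := hG.dist_triangle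
    _ ≤ 1 + W.length := by
        gcongr
        rcases h.2.1 with he | ha
        · rw [he, SimpleGraph.dist_self]; omega
        · exact le_of_eq (dist_eq_one_iff_adj.mpr ha)
    _ = W.length + 1 := by omega

lemma dist_snd_le (hH : H.Connected) {x y : α × β} (W : (strongProd G H).Walk x y) :
    H.dist x.2 y.2 ≤ W.length := by
  induction W with
  | nil => simp
  | cons h W ih =>
    rename_i u v w
    calc H.dist u.2 w.2 ≤ H.dist u.2 v.2 + H.dist v.2 w.2 := hH.dist_triangle
    _ ≤ 1 + W.length := by
        gcongr
        rcases h.2.2 with he | ha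
        · rw [he, SimpleGraph.dist_self]; omega
        · exact le_of_eq (dist_eq_one_iff_adj.mpr ha)
    _ = W.length + 1 := by omega

lemma strongProd_dist (hG : G.Connected) (hH : H.Connected) (a c : α) (b d : β) :
    (strongProd G H).dist (a, b) (c, d) = max (G.dist a c) (H.dist b d) := by
  apply le_antisymm
  · obtain ⟨p, hp⟩ := hG.exists_walk_length_eq_dist a c
    obtain ⟨q, hq⟩ := hH.exists_walk_length_eq_dist b d
    calc (strongProd G H).dist (a, b) (c, d) ≤ (prodWalk p q).length := dist_le _
    _ = max p.length q.length := prodWalk_length p q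
    _ = _ := by rw [hp, hq]
  · obtain ⟨W, hW⟩ := (strongProd_connected hG hH).exists_walk_length_eq_dist (a, b) (c, d)
    rw [← hW]
    exact max_le (dist_fst_le hG W) (dist_snd_le hH W)

end ProdWalk

section MD

variable {G : SimpleGraph α} {H : SimpleGraph β} (hG : G.Connected) (hH : H.Connected)

lemma mmd_symm {u v : α} (h : MutuallyMaximallyDistant G u v) :
    MutuallyMaximallyDistant G v u := ⟨h.2, h.1⟩

include hG hH in
lemma mdf_prod_iff {a c : α} {b d : β} :
    MaximallyDistantFrom (strongProd G H) (a, b) (c, d) ↔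
      ((H.dist b d ≤ G.dist a c → MaximallyDistantFrom G a c) ∧
       (G.dist a c ≤ H.dist b d → MaximallyDistantFrom H b d)) := by
  constructor
  · intro h
    constructor
    · intro hq w haw
      have := h (w, b) ⟨fun he => haw.ne (congrArg Prod.fst he), Or.inr haw, Or.inl rfl⟩
      rw [strongProd_dist hG hH, strongProd_dist hG hH] at this
      have h2 : G.dist c w ≤ max (G.dist c w) (H.dist d b) := le_max_left _ _
      have h3 : max (G.dist a c) (H.dist b d) = G.dist a c := max_eq_left hq
      omega
    · intro hq w hbw
      have := h (a, w) ⟨fun he => hbw.ne (congrArg Prod.snd he), Or.inl rfl, Or.inr hbw⟩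
      rw [strongProd_dist hG hH, strongProd_dist hG hH] at this
      have h2 : H.dist d w ≤ max (G.dist c a) (H.dist d w) := le_max_right _ _
      have h3 : max (G.dist a c) (H.dist b d) = H.dist b d := max_eq_right hq
      omega
  · rintro ⟨h1, h2⟩ ⟨w1, w2⟩ hadj
    rw [strongProd_dist hG hH, strongProd_dist hG hH]
    apply max_le
    · rcases hadj.2.1 with he | ha
      · have he' : a = w1 := he
        rw [← he', dist_comm]
        exact le_max_left _ _
      · rcases le_or_gt (H.dist b d) (G.dist a c) with hle | hlt
        · exact le_trans (h1 hle w1 ha) (le_max_left _ _)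
        · have ht : G.dist c w1 ≤ G.dist c a + G.dist a w1 := hG.dist_triangle
          rw [dist_eq_one_iff_adj.mpr ha] at ht
          have hc : G.dist c a = G.dist a c := dist_comm
          have : G.dist c w1 ≤ H.dist b d := by omega
          exact le_trans this (le_max_right _ _)
    · rcases hadj.2.2 with he | ha
      · have he' : b = w2 := he
        rw [← he', dist_comm]
        exact le_max_right _ _
      · rcases le_or_gt (G.dist a c) (H.dist b d) with hle | hlt
        · exact le_trans (h2 hle w2 ha) (le_max_right _ _)
        · have ht : H.dist d w2 ≤ H.dist d b + H.dist b w2 := hH.dist_triangle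
          rw [dist_eq_one_iff_adj.mpr ha] at ht
          have hc : H.dist d b = H.dist b d := dist_comm
          have : H.dist d w2 ≤ G.dist a c := by omega
          exact le_trans this (le_max_left _ _)

include hG hH in
lemma mdf_prod_of {a c : α} {b d : β} (h1 : a = c ∨ MutuallyMaximallyDistant G a c)
    (h2 : b = d ∨ MutuallyMaximallyDistant H b d) (hne : (a, b) ≠ (c, d)) :
    MaximallyDistantFrom (strongProd G H) (a, b) (c, d) := by
  rw [mdf_prod_iff hG hH]
  constructor
  · intro hle
    rcases h1 with rfl | hm
    · have h0 : G.dist a a = 0 := SimpleGraph.dist_self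
      have : b = d := hH.dist_eq_zero_iff.mp (by omega)
      exact absurd (by rw [this]) hne
    · exact hm.1
  · intro hle
    rcases h2 with rfl | hm
    · have h0 : H.dist b b = 0 := SimpleGraph.dist_self
      have : a = c := hG.dist_eq_zero_iff.mp (by omega)
      exact absurd (by rw [this]) hne
    · exact hm.1

include hG hH in
lemma srg_prod_adj_of {a c : α} {b d : β} (h1 : a = c ∨ MutuallyMaximallyDistant G a c)
    (h2 : b = d ∨ MutuallyMaximallyDistant H b d) (hne : (a, b) ≠ (c, d)) :
    (strongResolvingGraph (strongProd G H)).Adj (a, b) (c, d) := by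
  refine ⟨hne, mdf_prod_of hG hH h1 h2 hne, ?_⟩
  exact mdf_prod_of hG hH (h1.imp Eq.symm mmd_symm) (h2.imp Eq.symm mmd_symm) (Ne.symm hne)

include hG hH in
lemma srg_prod_adj_imp {a c : α} {b d : β}
    (h : (strongResolvingGraph (strongProd G H)).Adj (a, b) (c, d)) :
    (strongResolvingGraph G).Adj a c ∨ (strongResolvingGraph H).Adj b d := by
  obtain ⟨hne, md1, md2⟩ := h
  rw [mdf_prod_iff hG hH] at md1 md2
  have hca : G.dist c a = G.dist a c := dist_comm
  have hdb : H.dist d b = H.dist b d := dist_comm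
  rcases lt_trichotomy (G.dist a c) (H.dist b d) with hlt | heq | hlt
  · refine Or.inr ⟨?_, md1.2 (le_of_lt hlt), md2.2 (by omega)⟩
    intro hbd
    rw [hbd, SimpleGraph.dist_self] at hlt
    omega
  · rcases Nat.eq_zero_or_pos (G.dist a c) with h0 | h0
    · have ha : a = c := hG.dist_eq_zero_iff.mp h0
      have hb : b = d := hH.dist_eq_zero_iff.mp (by omega)
      exact absurd (by rw [ha, hb]) hne
    · refine Or.inl ⟨?_, md1.1 (le_of_eq heq.symm), md2.1 (by omega)⟩
      intro hac
      rw [hac, SimpleGraph.dist_self] at h0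
      omega
  · refine Or.inl ⟨?_, md1.1 (le_of_lt hlt), md2.1 (by omega)⟩
    intro hac
    rw [hac, SimpleGraph.dist_self] at hlt
    omega

end MD

section OPF

variable {K : SimpleGraph α} (hK : K.Connected)

include hK in
lemma my_dist_lt_card [Fintype α] [DecidableEq α] (u v : α) : K.dist u v < Fintype.card α := by
  obtain ⟨p, hp⟩ := hK.exists_walk_length_eq_dist u v
  calc K.dist u v ≤ p.bypass.length := dist_le _
  _ < Fintype.card α := p.bypass_isPath.length_lt

include hK in
lemma exists_md_aux [Fintype α] [DecidableEq α] (v : α) :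
    ∀ n (u : α), Fintype.card α - K.dist v u ≤ n →
      ∃ u', MaximallyDistantFrom K u' v ∧ K.dist v u' = K.dist v u + K.dist u u' := by
  intro n
  induction n with
  | zero =>
    intro u hu
    have := my_dist_lt_card hK v u
    omega
  | succ n ih =>
    intro u hu
    by_cases hmd : MaximallyDistantFrom K u v
    · exact ⟨u, hmd, by simp⟩
    · simp only [MaximallyDistantFrom, not_forall] at hmd
      obtain ⟨w, hadj, hgt⟩ := hmd
      push_neg at hgt
      have h1 : K.dist v w ≤ K.dist v u + 1 := by
        have := hK.dist_triangle (v := u) (u := v) (w := w)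
        rw [dist_eq_one_iff_adj.mpr hadj] at this
        exact this
      have hc : K.dist u v = K.dist v u := dist_comm
      have h2 : K.dist v w = K.dist v u + 1 := by omega
      obtain ⟨u', hmd', hd'⟩ := ih w (by omega)
      refine ⟨u', hmd', ?_⟩
      have t1 : K.dist u u' ≤ K.dist u w + K.dist w u' := hK.dist_triangle
      have t2 : K.dist v u' ≤ K.dist v u + K.dist u u' := hK.dist_triangle
      have t3 : K.dist u w = 1 := dist_eq_one_iff_adj.mpr hadj
      omega

include hK in
lemma exists_md [Fintype α] [DecidableEq α] (v u : α) :
    ∃ u', MaximallyDistantFrom K u' v ∧ K.dist v u' = K.dist v u + K.dist u u' :=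
  exists_md_aux hK v _ u le_rfl

include hK in
lemma exists_neighbor_toward [Fintype α] [DecidableEq α] {v w : α} (hvw : v ≠ w) :
    ∃ z, K.Adj v z ∧ K.dist z w + 1 = K.dist v w := by
  obtain ⟨p, hp⟩ := hK.exists_walk_length_eq_dist v w
  cases p with
  | nil => exact absurd rfl hvw
  | cons hadj q =>
    rename_i z
    refine ⟨z, hadj, ?_⟩
    have h1 : K.dist z w ≤ q.length := dist_le _
    have h2 : K.dist v w ≤ K.dist v z + K.dist z w := hK.dist_triangle
    have h3 : K.dist v z ≤ 1 := by rw [dist_eq_one_iff_adj.mpr hadj]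
    simp only [Walk.length_cons] at hp
    omega

include hK in
theorem gen_iff_cover [Fintype α] [DecidableEq α] (S : Finset α) :
    IsStrongMetricGenerator K S ↔
      ∀ u v, (strongResolvingGraph K).Adj u v → u ∈ S ∨ v ∈ S := by
  constructor
  · intro hgen u v ⟨huv, mdu, mdv⟩
    by_contra hcon
    push_neg at hcon
    obtain ⟨w, hwS, hres⟩ := hgen u v huv
    have hwu : w ≠ u := fun h => hcon.1 (h ▸ hwS)
    have hwv : w ≠ v := fun h => hcon.2 (h ▸ hwS)
    have hc1 : K.dist u w = K.dist w u := dist_comm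
    have hc2 : K.dist v w = K.dist w v := dist_comm
    have hc3 : K.dist u v = K.dist v u := dist_comm
    rcases hres with h | h
    · -- dist w u = dist w v + dist v u ; contradict mdv (v MD from u)
      obtain ⟨z, hadj, hz⟩ := exists_neighbor_toward hK hwv.symm
      have t : K.dist u w ≤ K.dist u z + K.dist z w := hK.dist_triangle
      have := mdv z hadj
      omega
    · obtain ⟨z, hadj, hz⟩ := exists_neighbor_toward hK hwu.symm
      have t : K.dist v w ≤ K.dist v z + K.dist z w := hK.dist_triangle
      have := mdu z hadj
      omega
  · intro hcov u v huv
    obtain ⟨u₁, hmd1, hd1⟩ := exists_md hK v u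
    obtain ⟨v₁, hmd2, hd2⟩ := exists_md hK u₁ v
    have hc1 : K.dist u₁ v = K.dist v u₁ := dist_comm
    have hc2 : K.dist u₁ v₁ = K.dist v₁ u₁ := dist_comm
    have hc3 : K.dist v v₁ = K.dist v₁ v := dist_comm
    have hc4 : K.dist u u₁ = K.dist u₁ u := dist_comm
    have hc5 : K.dist u v = K.dist v u := dist_comm
    have hpos : 0 < K.dist v u := hK.pos_dist_of_ne (Ne.symm huv)
    have hmd3 : MaximallyDistantFrom K u₁ v₁ := by
      intro w hw
      have t1 : K.dist v₁ w ≤ K.dist v₁ v + K.dist v w := hK.dist_triangle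
      have t2 := hmd1 w hw
      omega
    have hne : u₁ ≠ v₁ := by
      intro h
      have hz : K.dist u₁ v₁ = 0 := by rw [h, SimpleGraph.dist_self]
      omega
    rcases hcov u₁ v₁ ⟨hne, hmd3, hmd2⟩ with hS | hS
    · refine ⟨u₁, hS, Or.inr ?_⟩
      have d1 : K.dist u₁ v = K.dist u₁ u + K.dist u v := by omega
      exact d1
    · refine ⟨v₁, hS, Or.inl ?_⟩
      have t : K.dist v₁ u₁ ≤ K.dist v₁ u + K.dist u u₁ := hK.dist_triangle
      have t2 : K.dist v₁ u ≤ K.dist v₁ v + K.dist v u := hK.dist_triangle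
      omega

lemma indep_nonempty_bdd [Fintype α] (G : SimpleGraph α) :
    {n | ∃ s : Finset α, IsIndepFinset G s ∧ s.card = n}.Nonempty ∧
      BddAbove {n | ∃ s : Finset α, IsIndepFinset G s ∧ s.card = n} := by
  constructor
  · exact ⟨0, ∅, fun u hu => absurd hu (by simp), Finset.card_empty⟩
  · exact ⟨Fintype.card α, fun n ⟨s, _, hs⟩ => hs ▸ Finset.card_le_univ s⟩

lemma exists_max_indep [Fintype α] (G : SimpleGraph α) :
    ∃ s : Finset α, IsIndepFinset G s ∧ s.card = _root_.indepNum G := by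
  obtain ⟨hne, hbdd⟩ := indep_nonempty_bdd G
  exact Nat.sSup_mem hne hbdd

lemma indep_card_le [Fintype α] (G : SimpleGraph α) {s : Finset α} (hs : IsIndepFinset G s) :
    s.card ≤ _root_.indepNum G :=
  le_csSup (indep_nonempty_bdd G).2 ⟨s, hs, rfl⟩

lemma cover_iff_indep_compl [Fintype α] [DecidableEq α] (G : SimpleGraph α) (S : Finset α) :
    (∀ u v, G.Adj u v → u ∈ S ∨ v ∈ S) ↔ IsIndepFinset G Sᶜ := by
  constructor
  · intro h u hu v hv hne hadj
    rcases h u v hadj with hS | hS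
    · exact (Finset.mem_compl.mp hu) hS
    · exact (Finset.mem_compl.mp hv) hS
  · intro h u v hadj
    by_contra hcon
    push_neg at hcon
    exact h u (Finset.mem_compl.mpr hcon.1) v (Finset.mem_compl.mpr hcon.2) hadj.ne hadj

include hK in
theorem sdim_eq_card_sub_indepNum [Fintype α] [DecidableEq α] :
    sdim K = Fintype.card α - _root_.indepNum (strongResolvingGraph K) := by
  obtain ⟨I, hI, hIcard⟩ := exists_max_indep (strongResolvingGraph K)
  have hgenI : IsStrongMetricGenerator K Iᶜ := by
    rw [gen_iff_cover hK]
    intro u v hadj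
    have := (cover_iff_indep_compl (strongResolvingGraph K) Iᶜ).mpr (by rwa [compl_compl])
    exact this u v hadj
  have hmem : Fintype.card α - _root_.indepNum (strongResolvingGraph K) ∈
      {n | ∃ s : Finset α, IsStrongMetricGenerator K s ∧ s.card = n} :=
    ⟨Iᶜ, hgenI, by rw [Finset.card_compl, hIcard]⟩
  apply le_antisymm
  · exact Nat.sInf_le hmem
  · apply le_csInf ⟨_, hmem⟩
    rintro n ⟨S, hgen, rfl⟩
    have hind : IsIndepFinset (strongResolvingGraph K) Sᶜ :=
      (cover_iff_indep_compl _ S).mp ((gen_iff_cover hK S).mp hgen)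
    have h1 : Sᶜ.card ≤ _root_.indepNum (strongResolvingGraph K) := indep_card_le _ hind
    have h2 : Sᶜ.card = Fintype.card α - S.card := Finset.card_compl S
    have h3 : S.card ≤ Fintype.card α := Finset.card_le_univ S
    omega

end OPF

section IndepProd

variable {G : SimpleGraph α} {H : SimpleGraph β}

lemma indepNum_le_card [Fintype α] (G : SimpleGraph α) : _root_.indepNum G ≤ Fintype.card α := by
  obtain ⟨s, _, hc⟩ := exists_max_indep G
  rw [← hc]
  exact Finset.card_le_univ s

lemma indep_prod_lower [Fintype α] [Fintype β] (hG : G.Connected) (hH : H.Connected) :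
    _root_.indepNum (strongResolvingGraph G) * _root_.indepNum (strongResolvingGraph H) ≤
      _root_.indepNum (strongResolvingGraph (strongProd G H)) := by
  classical
  obtain ⟨I₁, hI₁, hc₁⟩ := exists_max_indep (strongResolvingGraph G)
  obtain ⟨I₂, hI₂, hc₂⟩ := exists_max_indep (strongResolvingGraph H)
  have hind : IsIndepFinset (strongResolvingGraph (strongProd G H)) (I₁ ×ˢ I₂) := by
    rintro ⟨a, b⟩ hab ⟨c, d⟩ hcd hne hadj
    rw [Finset.mem_product] at hab hcd
    rcases srg_prod_adj_imp hG hH hadj with h | h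
    · exact hI₁ a hab.1 c hcd.1 h.1 h
    · exact hI₂ b hab.2 d hcd.2 h.1 h
  have := indep_card_le _ hind
  rwa [Finset.card_product, hc₁, hc₂] at this

lemma indep_part_bound [Fintype α] [Fintype β] [DecidableEq α]
    (hG : G.Connected) (hH : H.Connected)
    {S : Finset (α × β)} (hS : IsIndepFinset (strongResolvingGraph (strongProd G H)) S)
    {p : Finset α} (hp : (strongResolvingGraph G).IsClique (p : Set α)) :
    (S.filter (fun x => x.1 ∈ p)).card ≤ _root_.indepNum (strongResolvingGraph H) := by
  classical
  set T := S.filter (fun x => x.1 ∈ p) with hT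
  have hmem : ∀ x ∈ T, x ∈ S ∧ x.1 ∈ p := by
    intro x hx
    exact Finset.mem_filter.mp hx
  have hkey : ∀ x ∈ T, ∀ y ∈ T, x ≠ y → x.2 ≠ y.2 ∧
      ¬ (strongResolvingGraph H).Adj x.2 y.2 := by
    rintro ⟨a, b⟩ hx ⟨c, d⟩ hy hne
    obtain ⟨hxS, hxp⟩ := hmem _ hx
    obtain ⟨hyS, hyp⟩ := hmem _ hy
    have h1 : a = c ∨ MutuallyMaximallyDistant G a c := by
      by_cases hac : a = c
      · exact Or.inl hac
      · exact Or.inr (hp hxp hyp hac).2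
    constructor
    · intro hbd
      have hbd' : b = d := hbd
      have hac : a ≠ c := by
        intro h
        exact hne (by rw [h, hbd'])
      exact hS _ hxS _ hyS hne (srg_prod_adj_of hG hH h1 (Or.inl hbd) hne)
    · intro hadj
      exact hS _ hxS _ hyS hne (srg_prod_adj_of hG hH h1 (Or.inr hadj.2) hne)
  have hinj : Set.InjOn Prod.snd (T : Set (α × β)) := by
    intro x hx y hy hxy
    by_contra hne
    exact (hkey x hx y hy hne).1 hxy
  have himg : IsIndepFinset (strongResolvingGraph H) (T.image Prod.snd) := by
    intro b hb d hd hbd hadj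
    obtain ⟨x, hxT, hxb⟩ := Finset.mem_image.mp hb
    obtain ⟨y, hyT, hyd⟩ := Finset.mem_image.mp hd
    have hne : x ≠ y := by
      intro h
      exact hbd (by rw [← hxb, ← hyd, h])
    refine (hkey x hxT y hyT hne).2 ?_
    rw [hxb, hyd]
    exact hadj
  calc T.card = (T.image Prod.snd).card := (Finset.card_image_of_injOn hinj).symm
  _ ≤ _root_.indepNum (strongResolvingGraph H) := indep_card_le _ himg

lemma indep_prod_upper [Fintype α] [Fintype β] [DecidableEq α]
    (hG : G.Connected) (hH : H.Connected) (hC : IsCGraph (strongResolvingGraph G)) :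
    _root_.indepNum (strongResolvingGraph (strongProd G H)) ≤
      _root_.indepNum (strongResolvingGraph G) * _root_.indepNum (strongResolvingGraph H) := by
  classical
  obtain ⟨P, hPcard, hPclique⟩ := hC
  obtain ⟨S, hS, hScard⟩ := exists_max_indep (strongResolvingGraph (strongProd G H))
  rw [← hScard, ← hPcard]
  have hsub : S ⊆ P.parts.biUnion (fun p => S.filter (fun x => x.1 ∈ p)) := by
    intro x hx
    obtain ⟨p, hp, hxp⟩ := P.exists_mem (Finset.mem_univ x.1)
    exact Finset.mem_biUnion.mpr ⟨p, hp, Finset.mem_filter.mpr ⟨hx, hxp⟩⟩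
  calc S.card ≤ (P.parts.biUnion fun p => S.filter (fun x => x.1 ∈ p)).card :=
      Finset.card_le_card hsub
  _ ≤ ∑ p ∈ P.parts, (S.filter (fun x => x.1 ∈ p)).card := Finset.card_biUnion_le
  _ ≤ ∑ _p ∈ P.parts, _root_.indepNum (strongResolvingGraph H) :=
      Finset.sum_le_sum fun p hp => indep_part_bound hG hH hS (hPclique p hp)
  _ = P.parts.card * _root_.indepNum (strongResolvingGraph H) := by
      rw [Finset.sum_const, smul_eq_mul]

end IndepProd

theorem sdim_strongProd_of_SR_CGraph [Fintype α] [DecidableEq α] [Fintype β]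
    (G : SimpleGraph α) (H : SimpleGraph β)
    (hG : G.Connected) (hGn : Nontrivial α) (hH : H.Connected) (hHn : Nontrivial β)
    (hC : IsCGraph (strongResolvingGraph G)) :
    sdim (strongProd G H) =
      Fintype.card β * sdim G + Fintype.card α * sdim H - sdim G * sdim H := by
  classical
  have hPc : (strongProd G H).Connected := strongProd_connected hG hH
  rw [sdim_eq_card_sub_indepNum hPc, sdim_eq_card_sub_indepNum hG,
    sdim_eq_card_sub_indepNum hH]
  have hprod : _root_.indepNum (strongResolvingGraph (strongProd G H)) =
      _root_.indepNum (strongResolvingGraph G) * _root_.indepNum (strongResolvingGraph H) :=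
    le_antisymm (indep_prod_upper hG hH hC) (indep_prod_lower hG hH)
  rw [hprod, Fintype.card_prod]
  have h₁ : _root_.indepNum (strongResolvingGraph G) ≤ Fintype.card α := indepNum_le_card _
  have h₂ : _root_.indepNum (strongResolvingGraph H) ≤ Fintype.card β := indepNum_le_card _
  obtain ⟨k₁, hk₁⟩ := Nat.le.dest h₁
  obtain ⟨k₂, hk₂⟩ := Nat.le.dest h₂
  rw [← hk₁, ← hk₂]
  rw [Nat.add_sub_cancel_left, Nat.add_sub_cancel_left]
  set b₁ := _root_.indepNum (strongResolvingGraph G)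
  set b₂ := _root_.indepNum (strongResolvingGraph H)
  have e1 : (b₁ + k₁) * (b₂ + k₂) = b₁ * b₂ + (b₂ * k₁ + b₁ * k₂ + k₁ * k₂) := by ring
  have e2 : (b₂ + k₂) * k₁ + (b₁ + k₁) * k₂ = k₁ * k₂ + (b₂ * k₁ + b₁ * k₂ + k₁ * k₂) := by
    ring
  rw [e1, e2]
  omega
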